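/- Let p_{1,1},…,p_{1,k_1},…,p_{q,1},…,p_{q,k_q} be K = k_1+⋯+k_q pairwise distinct prime numbers, let b_{i,j} ∈ {0,1} be arbitrary bits, and for each i set π_i = Σ_{j=1}^{k_i} (−1)^{b_{i,j}} √p_{i,j}. Let Q(x_1,…,x_q) be a polynomial with integer coefficients such that for each i the degree of Q in the variable x_i is strictly less than 2^{k_i}. Then Q is not the identically zero polynomial if and only if Q(π_1,…,π_q) ≠ 0. -/

import Mathlib

open Finset

theorem grid_zero : ∀ (n : ℕ) (P : MvPolynomial (Fin n) ℝ) (A : Fin n → Finset ℝ),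
    (∀ i, P.degreeOf i < (A i).card) →
    (∀ y : Fin n → ℝ, (∀ i, y i ∈ A i) → MvPolynomial.eval y P = 0) → P = 0 := by
  intro n
  induction n with
  | zero =>
    intro P A _ hz
    have h0 := hz Fin.elim0 (fun i => i.elim0)
    rw [MvPolynomial.eq_C_of_isEmpty P] at h0 ⊢
    rw [MvPolynomial.eval_C] at h0
    rw [h0, map_zero]
  | succ n ih =>
    intro P A hd hz
    set P' := MvPolynomial.finSuccEquiv ℝ n P with hP'
    have hco : ∀ i, P'.coeff i = 0 := by
      intro i
      apply ih _ (fun j => A j.succ)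
        (fun j => lt_of_le_of_lt (MvPolynomial.degreeOf_coeff_finSuccEquiv P j i) (hd j.succ))
      intro x hx
      have hone : Polynomial.map (MvPolynomial.eval x) P' = 0 := by
        apply Polynomial.eq_zero_of_natDegree_lt_card_of_eval_eq_zero' _ (A 0)
        · intro a ha
          rw [← MvPolynomial.eval_eq_eval_mv_eval']
          apply hz (Fin.cons a x)
          intro j
          refine Fin.cases ?_ ?_ j
          · simpa using ha
          · intro j'; simpa using hx j'
        · calc (Polynomial.map (MvPolynomial.eval x) P').natDegree ≤ P'.natDegree :=
                Polynomial.natDegree_map_le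
            _ = P.degreeOf 0 := MvPolynomial.natDegree_finSuccEquiv P
            _ < (A 0).card := hd 0
      have h2 := congrArg (fun pp => Polynomial.coeff pp i) hone
      simpa [Polynomial.coeff_map] using h2
    have hP'0 : P' = 0 := Polynomial.ext (by simpa using hco)
    have := (MvPolynomial.finSuccEquiv ℝ n).injective (a₁ := P) (a₂ := 0) (by rw [← hP', hP'0, map_zero])
    exact this

open Finset Real

noncomputable def KF (T : Finset ℕ) : IntermediateField ℚ ℝ :=
  IntermediateField.adjoin ℚ ((fun n : ℕ => Real.sqrt n) '' ↑T)

set_option synthInstance.maxHeartbeats 400000 in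
theorem exists_rep (F : IntermediateField ℚ ℝ) (α : ℝ) (hα2 : α ^ 2 ∈ F) (x : ℝ)
    (hx : x ∈ IntermediateField.adjoin F {α}) :
    ∃ a b : ℝ, a ∈ F ∧ b ∈ F ∧ x = a + b * α := by
  set c : F := ⟨α ^ 2, hα2⟩ with hc
  have hint : IsIntegral F α := by
    refine ⟨Polynomial.X ^ 2 - Polynomial.C c, Polynomial.monic_X_pow_sub_C c two_ne_zero, ?_⟩
    simp [Polynomial.eval₂_sub, hc]
  rw [← IntermediateField.mem_toSubalgebra,
    IntermediateField.adjoin_simple_toSubalgebra_of_isAlgebraic hint.isAlgebraic,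
    Algebra.adjoin_singleton_eq_range_aeval] at hx
  obtain ⟨P, hP0⟩ := hx
  have hP : Polynomial.aeval α P = x := hP0
  have hmonic : (Polynomial.X ^ 2 - Polynomial.C c).Monic := Polynomial.monic_X_pow_sub_C c two_ne_zero
  set r := P %ₘ (Polynomial.X ^ 2 - Polynomial.C c) with hr
  have haeval0 : Polynomial.aeval α (Polynomial.X ^ 2 - Polynomial.C c : Polynomial F) = 0 := by
    rw [map_sub, map_pow, Polynomial.aeval_X, Polynomial.aeval_C]
    have hcc : (algebraMap F ℝ) c = α ^ 2 := rfl
    rw [hcc]; ring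
  have hx2 : x = Polynomial.aeval α r := by
    conv_lhs => rw [← hP, ← Polynomial.modByMonic_add_div P (Polynomial.X ^ 2 - Polynomial.C c)]
    rw [map_add, map_mul, haeval0, zero_mul, add_zero]
  have hq1 : (Polynomial.X ^ 2 - Polynomial.C c) ≠ 1 := by
    intro h
    have h2 := congrArg Polynomial.natDegree h
    rw [Polynomial.natDegree_X_pow_sub_C, Polynomial.natDegree_one] at h2
    omega
  have hdeg1 : r.natDegree ≤ 1 := by
    have := Polynomial.natDegree_modByMonic_lt P hmonic hq1
    rw [← hr, Polynomial.natDegree_X_pow_sub_C] at this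
    omega
  refine ⟨algebraMap F ℝ (r.coeff 0), algebraMap F ℝ (r.coeff 1), (r.coeff 0).2, (r.coeff 1).2, ?_⟩
  rw [hx2]
  conv_lhs => rw [Polynomial.eq_X_add_C_of_natDegree_le_one hdeg1]
  rw [map_add, map_mul, Polynomial.aeval_X, Polynomial.aeval_C, Polynomial.aeval_C]
  ring

theorem crux : ∀ (T : Finset ℕ), (∀ p ∈ T, p.Prime) → ∀ m : ℕ, Squarefree m → 1 < m →
    (∀ r : ℕ, r.Prime → r ∣ m → r ∉ T) → Real.sqrt m ∉ KF T := by
  intro T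
  induction T using Finset.induction_on with
  | empty =>
    intro _ m hsf hm _ hmem
    have hKF : KF ∅ = ⊥ := by
      simp [KF, IntermediateField.adjoin_empty]
    rw [hKF, IntermediateField.mem_bot] at hmem
    obtain ⟨y, hy⟩ := hmem
    have hns : ¬ IsSquare m := by
      rintro ⟨t, ht⟩
      have : IsUnit t := hsf t (by rw [ht])
      rw [Nat.isUnit_iff] at this
      rw [this] at ht
      omega
    have hirr : Irrational (Real.sqrt m) := irrational_sqrt_natCast_iff.mpr hns
    exact hirr ⟨y, by rw [← hy]; simp⟩
  | @insert p T hpT ih =>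
    intro hprime m hsf hm havoid hmem
    have hTprime : ∀ q ∈ T, q.Prime := fun q hq => hprime q (mem_insert_of_mem hq)
    have hpp : p.Prime := hprime p (mem_insert_self p T)
    -- rewrite the field
    have hrw : √m ∈ IntermediateField.adjoin (KF T) {(√p : ℝ)} := by
      have : KF (insert p T) =
          IntermediateField.restrictScalars ℚ (IntermediateField.adjoin (KF T) {(√p : ℝ)}) := by
        rw [KF, Finset.coe_insert, Set.image_insert_eq, ← Set.union_singleton,
          ← IntermediateField.adjoin_adjoin_left]
        rfl
      rw [this] at hmem
      exact hmem
    have hα2 : (√p : ℝ) ^ 2 ∈ KF T := by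
      rw [Real.sq_sqrt (by positivity)]
      exact_mod_cast natCast_mem (KF T) p
    obtain ⟨a, b, ha, hb, heq⟩ := exists_rep (KF T) (√p) hα2 (√m) hrw
    have hsp : √p ∉ KF T := by
      refine ih hTprime p hpp.squarefree hpp.one_lt fun r hr hrd hrT => ?_
      rw [(Nat.prime_dvd_prime_iff_eq hr hpp).mp hrd] at hrT
      exact hpT hrT
    have hsm : √m ∉ KF T := ih hTprime m hsf hm fun r hr hrd => fun hrT =>
      havoid r hr hrd (mem_insert_of_mem hrT)
    have hpdvd : ¬ (p ∣ m) := fun hd => havoid p hpp hd (mem_insert_self p T)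
    have hsq : (m : ℝ) = a ^ 2 + b ^ 2 * p + 2 * a * b * √p := by
      have h1 : (√m) ^ 2 = (m : ℝ) := Real.sq_sqrt (by positivity)
      have h2 : (√p) ^ 2 = (p : ℝ) := Real.sq_sqrt (by positivity)
      rw [heq] at h1
      ring_nf at h1 ⊢
      nlinarith [h1, h2]
    by_cases hb0 : b = 0
    · exact hsm (by rw [heq, hb0, zero_mul, add_zero]; exact ha)
    by_cases ha0 : a = 0
    · -- √m = b √p, so √(m p) = b p ∈ KF T
      have hmp : √(↑(m * p)) ∈ KF T := by
        have : √(↑(m * p)) = b * p := by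
          push_cast
          rw [Real.sqrt_mul (by positivity), heq, ha0, zero_add, mul_assoc,
            Real.mul_self_sqrt (by positivity)]
        rw [this]
        exact mul_mem hb (natCast_mem (KF T) p)
      refine ih hTprime (m * p) ?_ ?_ ?_ hmp
      · rw [Nat.squarefree_mul ((Nat.coprime_comm).mp (hpp.coprime_iff_not_dvd.mpr hpdvd))]
        exact ⟨hsf, hpp.squarefree⟩
      · calc 1 < m := hm
          _ ≤ m * p := Nat.le_mul_of_pos_right m hpp.pos
      · intro r hr hrd hrT
        rcases (Nat.Prime.dvd_mul hr).mp hrd with h | h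
        · exact havoid r hr h (mem_insert_of_mem hrT)
        · rw [(Nat.prime_dvd_prime_iff_eq hr hpp).mp h] at hrT
          exact hpT hrT
    · -- both nonzero: √p ∈ KF T
      apply hsp
      have : √p = ((m : ℝ) - a ^ 2 - b ^ 2 * p) / (2 * a * b) := by
        rw [hsq]; field_simp; ring
      rw [this]
      have h2mem : (2 : ℝ) ∈ KF T := by exact_mod_cast natCast_mem (KF T) 2
      exact div_mem (sub_mem (sub_mem (natCast_mem _ m) (pow_mem ha 2))
        (mul_mem (pow_mem hb 2) (natCast_mem _ p))) (mul_mem (mul_mem h2mem ha) hb)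

theorem indep_powerset : ∀ (T : Finset ℕ), (∀ p ∈ T, p.Prime) →
    ∀ c : Finset ℕ → ℚ, (∑ S ∈ T.powerset, (c S : ℝ) * ∏ s ∈ S, Real.sqrt s) = 0 →
    ∀ S ∈ T.powerset, c S = 0 := by
  intro T
  induction T using Finset.induction_on with
  | empty =>
    intro _ c hc S hS
    rw [Finset.mem_powerset, Finset.subset_empty] at hS
    subst hS
    rw [Finset.powerset_empty, Finset.sum_singleton, Finset.prod_empty, mul_one] at hc
    exact_mod_cast hc
  | @insert p T hpT ih =>
    intro hprime c hc S hS
    have hTprime : ∀ q ∈ T, q.Prime := fun q hq => hprime q (mem_insert_of_mem hq)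
    have hpp : p.Prime := hprime p (mem_insert_self p T)
    have hdisj : Disjoint T.powerset (T.powerset.image (insert p)) := by
      rw [Finset.disjoint_left]
      intro U hU hU'
      rw [Finset.mem_image] at hU'
      obtain ⟨x, hx, rfl⟩ := hU'
      exact hpT (Finset.mem_powerset.mp hU (mem_insert_self p x))
    have himg : ∀ x ∈ T.powerset, ∀ y ∈ T.powerset, insert p x = insert p y → x = y := by
      intro x hx y hy hxy
      have hpx : p ∉ x := fun h => hpT (Finset.mem_powerset.mp hx h)
      have hpy : p ∉ y := fun h => hpT (Finset.mem_powerset.mp hy h)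
      rw [← Finset.erase_insert hpx, ← Finset.erase_insert hpy, hxy]
    rw [Finset.powerset_insert, Finset.sum_union hdisj, Finset.sum_image himg] at hc
    have hins : ∀ S ∈ T.powerset,
        (c (insert p S) : ℝ) * ∏ s ∈ insert p S, Real.sqrt s
          = ((c (insert p S) : ℝ) * ∏ s ∈ S, Real.sqrt s) * Real.sqrt p := by
      intro S hS
      rw [Finset.prod_insert (fun h => hpT (Finset.mem_powerset.mp hS h))]
      ring
    rw [Finset.sum_congr rfl hins, ← Finset.sum_mul] at hc
    set A := ∑ S ∈ T.powerset, (c S : ℝ) * ∏ s ∈ S, Real.sqrt s with hA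
    set B := ∑ S ∈ T.powerset, (c (insert p S) : ℝ) * ∏ s ∈ S, Real.sqrt s with hB
    have hmemw : ∀ (d : Finset ℕ → ℚ),
        (∑ S ∈ T.powerset, (d S : ℝ) * ∏ s ∈ S, Real.sqrt s) ∈ KF T := by
      intro d
      refine sum_mem fun U hU => mul_mem (SubfieldClass.ratCast_mem _ _) (prod_mem fun s hs => ?_)
      exact IntermediateField.subset_adjoin ℚ _ ⟨s, Finset.mem_coe.mpr (Finset.mem_powerset.mp hU hs), rfl⟩
    have hAm : A ∈ KF T := hmemw c
    have hBm : B ∈ KF T := hmemw _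
    have hB0 : B = 0 := by
      by_contra hB0
      have hsp : Real.sqrt p = -A / B := by
        field_simp
        linarith [hc]
      have hmem2 : Real.sqrt p ∈ KF T := by rw [hsp]; exact div_mem (neg_mem hAm) hBm
      exact crux T hTprime p hpp.squarefree hpp.one_lt
        (fun r hr hrd hrT => hpT (((Nat.prime_dvd_prime_iff_eq hr hpp).mp hrd) ▸ hrT)) hmem2
    have hA0 : A = 0 := by rw [hB0, zero_mul, add_zero] at hc; exact hc
    have hc1 := ih hTprime c hA0
    have hc2 := ih hTprime (fun U => c (insert p U)) hB0
    rw [Finset.mem_powerset] at hS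
    by_cases hpS : p ∈ S
    · have hSe : S.erase p ⊆ T := by
        intro x hx
        rcases Finset.mem_erase.mp hx with ⟨hxp, hxS⟩
        exact (Finset.mem_insert.mp (hS hxS)).resolve_left hxp
      have := hc2 (S.erase p) (Finset.mem_powerset.mpr hSe)
      simp only [Finset.insert_erase hpS] at this
      exact this
    · have hST : S ⊆ T := fun x hx =>
        (Finset.mem_insert.mp (hS hx)).resolve_left (fun h => hpS (h ▸ hx))
      exact hc1 S (Finset.mem_powerset.mpr hST)

section Indexed

variable {I : Type*} [Fintype I] [DecidableEq I] (pr : I → ℕ)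

theorem indep_I (hpr : ∀ s, (pr s).Prime) (hinj : Function.Injective pr)
    (c : Finset I → ℚ) (hc : ∑ S : Finset I, (c S : ℝ) * ∏ s ∈ S, Real.sqrt (pr s) = 0) :
    ∀ S, c S = 0 := by
  classical
  set T := Finset.univ.image pr with hT
  have hTprime : ∀ u ∈ T, u.Prime := by
    intro u hu
    rw [hT, Finset.mem_image] at hu
    obtain ⟨s, _, rfl⟩ := hu
    exact hpr s
  set c' : Finset ℕ → ℚ := fun U => c (Finset.univ.filter fun s => pr s ∈ U) with hc'
  have key : ∀ S : Finset I, (Finset.univ.filter fun s => pr s ∈ S.image pr) = S := by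
    intro S
    ext x
    simp only [Finset.mem_filter, Finset.mem_univ, true_and, Finset.mem_image]
    constructor
    · rintro ⟨y, hy, hxy⟩
      rwa [← hinj hxy]
    · intro h
      exact ⟨x, h, rfl⟩
  have hsum : ∑ S : Finset I, (c S : ℝ) * ∏ s ∈ S, Real.sqrt (pr s)
      = ∑ U ∈ T.powerset, (c' U : ℝ) * ∏ u ∈ U, Real.sqrt u := by
    refine Finset.sum_bij (fun S _ => S.image pr) ?_ ?_ ?_ ?_
    · intro S _
      rw [Finset.mem_powerset, hT]
      exact Finset.image_subset_image (Finset.subset_univ S)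
    · intro S _ S' _ h
      exact Finset.image_injective hinj h
    · intro U hU
      refine ⟨Finset.univ.filter fun s => pr s ∈ U, Finset.mem_univ _, ?_⟩
      ext u
      simp only [Finset.mem_image, Finset.mem_filter, Finset.mem_univ, true_and]
      constructor
      · rintro ⟨s, hs, rfl⟩; exact hs
      · intro hu
        have := Finset.mem_powerset.mp hU hu
        rw [hT, Finset.mem_image] at this
        obtain ⟨s, _, rfl⟩ := this
        exact ⟨s, hu, rfl⟩
    · intro S _
      rw [hc']
      simp only [key S]
      rw [Finset.prod_image (fun x _ y _ h => hinj h)]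
  have := indep_powerset T hTprime c' (by rw [← hsum]; exact hc)
  intro S
  have hmem : S.image pr ∈ T.powerset := by
    rw [Finset.mem_powerset, hT]
    exact Finset.image_subset_image (Finset.subset_univ S)
  have h2 := this (S.image pr) hmem
  have h3 : c' (S.image pr) = c S := by
    rw [hc']
    exact congrArg c (key S)
  rwa [h3] at h2

theorem w_li (hpr : ∀ s, (pr s).Prime) (hinj : Function.Injective pr) :
    LinearIndependent ℚ (fun S : Finset I => ∏ s ∈ S, Real.sqrt (pr s)) := by
  rw [Fintype.linearIndependent_iff]
  intro g hg
  refine indep_I pr hpr hinj g ?_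
  rw [← hg]
  refine Finset.sum_congr rfl fun S _ => ?_
  rw [Rat.smul_def]

end Indexed

section Tau

theorem conj_eval {I : Type*} [Fintype I] [DecidableEq I] (pr : I → ℕ) {q : ℕ}
    (hpr : ∀ s, (pr s).Prime) (hinj : Function.Injective pr)
    (e : I → ℝ) (he : ∀ s, e s * e s = 1)
    (pp1 pp2 : Fin q → ℝ) (coef : Fin q → I → ℚ)
    (hpp1 : ∀ i, pp1 i = ∑ s, (coef i s : ℝ) * Real.sqrt (pr s))
    (hpp2 : ∀ i, pp2 i = ∑ s, (coef i s : ℝ) * (e s * Real.sqrt (pr s)))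
    (Q : MvPolynomial (Fin q) ℤ) (h0 : MvPolynomial.aeval pp1 Q = 0) :
    MvPolynomial.aeval pp2 Q = 0 := by
  classical
  set w : Finset I → ℝ := fun S => ∏ s ∈ S, Real.sqrt (pr s) with hw
  have hli := w_li pr hpr hinj
  set V : Submodule ℚ ℝ := Submodule.span ℚ (Set.range w) with hV
  have hmemw : ∀ S, w S ∈ V := fun S => Submodule.subset_span ⟨S, rfl⟩
  set B : Module.Basis (Finset I) ℚ V := Module.Basis.span hli with hB
  set sg : Finset I → ℝ := fun S => ∏ s ∈ S, e s with hsgdef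
  set t : V →ₗ[ℚ] ℝ := B.constr ℚ (fun S => sg S * w S) with ht
  obtain ⟨τ, hτ⟩ := LinearMap.exists_extend t
  have hτw : ∀ S, τ (w S) = sg S * w S := by
    intro S
    have hBS : (B S : ℝ) = w S := congrArg Subtype.val (Module.Basis.span_apply hli S)
    calc τ (w S) = (τ ∘ₗ V.subtype) (B S) := by
          rw [LinearMap.comp_apply]; exact congrArg τ hBS.symm
      _ = t (B S) := by rw [hτ]
      _ = sg S * w S := by rw [ht, Module.Basis.constr_basis]
  have hprodmul : ∀ (f : I → ℝ) (S T : Finset I),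
      (∏ s ∈ S, f s) * (∏ s ∈ T, f s)
        = (∏ s ∈ S ∩ T, (f s * f s)) * ∏ s ∈ (S \ T) ∪ (T \ S), f s := by
    intro f S T
    have hd1 : Disjoint (S ∩ T) (S \ T) := by
      rw [Finset.disjoint_left]
      intro a ha ha'
      exact (Finset.mem_sdiff.mp ha').2 (Finset.mem_inter.mp ha).2
    have hu1 : (S ∩ T) ∪ (S \ T) = S := by
      ext a
      simp only [Finset.mem_union, Finset.mem_inter, Finset.mem_sdiff]
      tauto
    have hd2 : Disjoint (T ∩ S) (T \ S) := by
      rw [Finset.disjoint_left]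
      intro a ha ha'
      exact (Finset.mem_sdiff.mp ha').2 (Finset.mem_inter.mp ha).2
    have hu2 : (T ∩ S) ∪ (T \ S) = T := by
      ext a
      simp only [Finset.mem_union, Finset.mem_inter, Finset.mem_sdiff]
      tauto
    have hd3 : Disjoint (S \ T) (T \ S) := by
      rw [Finset.disjoint_left]
      intro a ha ha'
      exact (Finset.mem_sdiff.mp ha').2 (Finset.mem_sdiff.mp ha).1
    calc (∏ s ∈ S, f s) * (∏ s ∈ T, f s)
        = ((∏ s ∈ S ∩ T, f s) * (∏ s ∈ S \ T, f s))
          * ((∏ s ∈ T ∩ S, f s) * (∏ s ∈ T \ S, f s)) := by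
          rw [← Finset.prod_union hd1, ← Finset.prod_union hd2, hu1, hu2]
      _ = ((∏ s ∈ S ∩ T, f s) * (∏ s ∈ S ∩ T, f s))
          * ((∏ s ∈ S \ T, f s) * (∏ s ∈ T \ S, f s)) := by
          rw [Finset.inter_comm T S]
          ring
      _ = (∏ s ∈ S ∩ T, (f s * f s)) * ((∏ s ∈ S \ T, f s) * (∏ s ∈ T \ S, f s)) := by
          rw [← Finset.prod_mul_distrib]
      _ = (∏ s ∈ S ∩ T, (f s * f s)) * ∏ s ∈ (S \ T) ∪ (T \ S), f s := by
          rw [Finset.prod_union hd3]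
  have hww : ∀ S T : Finset I, w S * w T
      = (∏ s ∈ S ∩ T, (pr s : ℚ)) • w ((S \ T) ∪ (T \ S)) := by
    intro S T
    have h1 : w S * w T = (∏ s ∈ S ∩ T, (Real.sqrt (pr s) * Real.sqrt (pr s)))
        * w ((S \ T) ∪ (T \ S)) := hprodmul (fun s => Real.sqrt (pr s)) S T
    rw [h1, Rat.smul_def]
    push_cast
    congr 1
    refine Finset.prod_congr rfl fun s _ => ?_
    rw [Real.mul_self_sqrt (by positivity)]
  have hsg : ∀ S T : Finset I, sg S * sg T = sg ((S \ T) ∪ (T \ S)) := by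
    intro S T
    have h1 : sg S * sg T = (∏ s ∈ S ∩ T, (e s * e s)) * sg ((S \ T) ∪ (T \ S)) :=
      hprodmul e S T
    rw [h1, Finset.prod_congr rfl (fun s _ => he s), Finset.prod_const_one, one_mul]
  -- closure of V under multiplication
  have hVmul : ∀ x, x ∈ V → ∀ y, y ∈ V → x * y ∈ V := by
    intro x hx
    refine Submodule.span_induction (p := fun x _ => ∀ y, y ∈ V → x * y ∈ V)
      ?_ ?_ ?_ ?_ hx
    · rintro x ⟨S, rfl⟩ y hy
      refine Submodule.span_induction (p := fun y _ => w S * y ∈ V) ?_ ?_ ?_ ?_ hy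
      · rintro z ⟨T, rfl⟩
        show w S * w T ∈ V
        rw [hww S T]
        exact Submodule.smul_mem _ _ (hmemw _)
      · show w S * 0 ∈ V
        rw [mul_zero]; exact Submodule.zero_mem _
      · intro a b _ _ hpa hpb
        show w S * (a + b) ∈ V
        rw [mul_add]; exact Submodule.add_mem _ hpa hpb
      · intro r z _ hpz
        show w S * (r • z) ∈ V
        rw [mul_smul_comm]; exact Submodule.smul_mem _ _ hpz
    · intro y hy
      show (0 : ℝ) * y ∈ V
      rw [zero_mul]; exact Submodule.zero_mem _
    · intro a b _ _ hpa hpb y hy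
      show (a + b) * y ∈ V
      rw [add_mul]; exact Submodule.add_mem _ (hpa y hy) (hpb y hy)
    · intro r z _ hpz y hy
      show (r • z) * y ∈ V
      rw [smul_mul_assoc]; exact Submodule.smul_mem _ _ (hpz y hy)
  -- τ is multiplicative on V
  have hτmul : ∀ x, x ∈ V → ∀ y, y ∈ V → τ (x * y) = τ x * τ y := by
    intro x hx
    refine Submodule.span_induction (p := fun x _ => ∀ y, y ∈ V → τ (x * y) = τ x * τ y)
      ?_ ?_ ?_ ?_ hx
    · rintro x ⟨S, rfl⟩ y hy
      refine Submodule.span_induction (p := fun y _ => τ (w S * y) = τ (w S) * τ y) ?_ ?_ ?_ ?_ hy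
      · rintro z ⟨T, rfl⟩
        show τ (w S * w T) = τ (w S) * τ (w T)
        rw [hww S T, map_smul, hτw, hτw, hτw, ← hsg S T, Rat.smul_def]
        have h2 := hww S T
        rw [Rat.smul_def] at h2
        linear_combination (-(sg S * sg T)) * h2
      · show τ (w S * 0) = τ (w S) * τ 0
        simp
      · intro a b _ _ hpa hpb
        show τ (w S * (a + b)) = τ (w S) * τ (a + b)
        rw [mul_add, map_add, map_add, hpa, hpb, mul_add]
      · intro r z _ hpz
        show τ (w S * (r • z)) = τ (w S) * τ (r • z)
        rw [mul_smul_comm, map_smul, map_smul, hpz, mul_smul_comm]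
    · intro y hy
      show τ ((0 : ℝ) * y) = τ 0 * τ y
      simp
    · intro a b _ _ hpa hpb y hy
      show τ ((a + b) * y) = τ (a + b) * τ y
      rw [add_mul, map_add, map_add, hpa y hy, hpb y hy, add_mul]
    · intro r z _ hpz y hy
      show τ ((r • z) * y) = τ (r • z) * τ y
      rw [smul_mul_assoc, map_smul, map_smul, hpz y hy, smul_mul_assoc]
  -- pp1 i lands in V and τ (pp1 i) = pp2 i
  have hpp1V : ∀ i, pp1 i ∈ V := by
    intro i
    rw [hpp1 i]
    refine Submodule.sum_mem _ fun s _ => ?_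
    have : (coef i s : ℝ) * Real.sqrt (pr s) = coef i s • w {s} := by
      rw [Rat.smul_def, hw]; simp
    rw [this]
    exact Submodule.smul_mem _ _ (hmemw _)
  have hτpp1 : ∀ i, τ (pp1 i) = pp2 i := by
    intro i
    rw [hpp1 i, hpp2 i, map_sum]
    refine Finset.sum_congr rfl fun s _ => ?_
    have h1 : (coef i s : ℝ) * Real.sqrt (pr s) = coef i s • w {s} := by
      rw [Rat.smul_def, hw]; simp
    rw [h1, map_smul, hτw, Rat.smul_def]
    have h2 : sg {s} = e s := by rw [hsgdef]; simp
    have h3 : w {s} = Real.sqrt (pr s) := by rw [hw]; simp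
    rw [h2, h3]
    try ring
  -- aeval membership and commutation
  have main : ∀ Q : MvPolynomial (Fin q) ℤ,
      MvPolynomial.aeval pp1 Q ∈ V ∧ τ (MvPolynomial.aeval pp1 Q) = MvPolynomial.aeval pp2 Q := by
    intro R
    induction R using MvPolynomial.induction_on with
    | C a =>
      constructor
      · rw [MvPolynomial.aeval_C]
        have : (algebraMap ℤ ℝ) a = (a : ℚ) • w ∅ := by
          rw [Rat.smul_def, hw]; simp
        rw [this]
        exact Submodule.smul_mem _ _ (hmemw _)
      · rw [MvPolynomial.aeval_C, MvPolynomial.aeval_C]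
        have h1 : (algebraMap ℤ ℝ) a = (a : ℚ) • w ∅ := by
          rw [Rat.smul_def, hw]; simp
        rw [h1, map_smul, hτw]
        have h2 : sg ∅ = 1 := by rw [hsgdef]; simp
        have h3 : w ∅ = 1 := by rw [hw]; simp
        rw [h2, h3, Rat.smul_def, mul_one]
        simp
    | add P1 P2 hP1 hP2 =>
      constructor
      · rw [map_add]; exact Submodule.add_mem _ hP1.1 hP2.1
      · rw [map_add, map_add, map_add, hP1.2, hP2.2]
    | mul_X P1 i hP1 =>
      constructor
      · rw [map_mul, MvPolynomial.aeval_X]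
        exact hVmul _ hP1.1 _ (hpp1V i)
      · have hx1 : MvPolynomial.aeval pp1 (P1 * MvPolynomial.X i)
            = MvPolynomial.aeval pp1 P1 * pp1 i := by rw [map_mul, MvPolynomial.aeval_X]
        have hx2 : MvPolynomial.aeval pp2 (P1 * MvPolynomial.X i)
            = MvPolynomial.aeval pp2 P1 * pp2 i := by rw [map_mul, MvPolynomial.aeval_X]
        rw [hx1, hx2, hτmul _ hP1.1 _ (hpp1V i), hP1.2, hτpp1 i]
  have := (main Q).2
  rw [h0, map_zero] at this
  exact this.symm

end Tau

/-- Let `p i j` (for `i : Fin q`, `j : Fin (k i)`) be pairwise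
distinct primes, `b i j` arbitrary bits, and `π i = ∑ j, (-1)^(b i j) * √(p i j)`.
If `Q` is an integer polynomial whose degree in each variable `x_i` is less than
`2 ^ k i`, then `Q ≠ 0` iff `Q(π_1, …, π_q) ≠ 0`. -/
theorem stmt_0 (q : ℕ) (k : Fin q → ℕ)
    (p : (i : Fin q) → Fin (k i) → ℕ) (hp : ∀ i j, (p i j).Prime)
    (hinj : Function.Injective fun x : Σ i : Fin q, Fin (k i) => p x.1 x.2)
    (b : (i : Fin q) → Fin (k i) → Bool)
    (Q : MvPolynomial (Fin q) ℤ) (hdeg : ∀ i, Q.degreeOf i < 2 ^ k i) :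
    Q ≠ 0 ↔
      MvPolynomial.aeval
        (fun i => ∑ j, (if b i j then (-1 : ℝ) else 1) * Real.sqrt (p i j)) Q ≠ 0 := by
  classical
  constructor
  · intro hQ hval
    apply hQ
    set pr : (Σ i : Fin q, Fin (k i)) → ℕ := fun s => p s.1 s.2 with hprdef
    have hprp : ∀ s, (pr s).Prime := fun s => hp s.1 s.2
    have hprinj : Function.Injective pr := hinj
    -- linear independence of the single square roots, blockwise
    have hW := w_li pr hprp hprinj
    have hsingle : LinearIndependent ℚ (fun s : Σ i : Fin q, Fin (k i) => Real.sqrt (pr s)) := by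
      have h2 := hW.comp (fun s : Σ i : Fin q, Fin (k i) => ({s} : Finset (Σ i : Fin q, Fin (k i))))
        (fun a c h => Finset.singleton_injective h)
      have h3 : ((fun S => ∏ s ∈ S, Real.sqrt (pr s)) ∘
          (fun s : Σ i : Fin q, Fin (k i) => ({s} : Finset (Σ i : Fin q, Fin (k i)))))
          = fun s => Real.sqrt (pr s) := by
        funext s
        simp
      rwa [h3] at h2
    -- every sign pattern kills Q
    have hzero : ∀ η : (Σ i : Fin q, Fin (k i)) → Bool,
        MvPolynomial.aeval
          (fun i => ∑ j, (if η ⟨i, j⟩ then (-1 : ℝ) else 1) * Real.sqrt (p i j)) Q = 0 := by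
      intro η
      set e : (Σ i : Fin q, Fin (k i)) → ℝ :=
        fun s => if xor (b s.1 s.2) (η s) then (-1 : ℝ) else 1 with hedef
      have he : ∀ s, e s * e s = 1 := by
        intro s
        by_cases h : (xor (b s.1 s.2) (η s)) = true
        · simp only [hedef, if_pos h]; norm_num
        · simp only [hedef, if_neg h]; norm_num
      set coefq : Fin q → (Σ i : Fin q, Fin (k i)) → ℚ :=
        fun i s => if s.1 = i then (if b s.1 s.2 then (-1 : ℚ) else 1) else 0 with hcoefq
      have hcollect : ∀ (i : Fin q) (F : (Σ i : Fin q, Fin (k i)) → ℝ),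
          (∀ s : Σ i : Fin q, Fin (k i), s.1 ≠ i → F s = 0) →
          ∑ s : Σ i : Fin q, Fin (k i), F s = ∑ j : Fin (k i), F ⟨i, j⟩ := by
        intro i F hF
        rw [← Finset.sum_filter_add_sum_filter_not Finset.univ
          (fun s : Σ i : Fin q, Fin (k i) => s.1 = i) F]
        rw [Finset.sum_eq_zero (fun s hs => hF s (Finset.mem_filter.mp hs).2), add_zero]
        refine (Finset.sum_bij (fun (j : Fin (k i)) _ => (⟨i, j⟩ : Σ i : Fin q, Fin (k i)))
          ?_ ?_ ?_ ?_).symm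
        · intro j _; simp
        · intro j1 _ j2 _ h
          have h' : (⟨i, j1⟩ : Σ i : Fin q, Fin (k i)) = ⟨i, j2⟩ := h
          simpa using h'
        · rintro ⟨i', j⟩ hs
          rw [Finset.mem_filter] at hs
          obtain ⟨-, h⟩ := hs
          subst h
          exact ⟨j, Finset.mem_univ _, rfl⟩
        · intro j _; rfl
      have E1 : ∀ i, (∑ j, (if b i j then (-1 : ℝ) else 1) * Real.sqrt (p i j))
          = ∑ s : Σ i : Fin q, Fin (k i), (coefq i s : ℝ) * Real.sqrt (pr s) := by
        intro i
        rw [hcollect i _ (by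
          intro s hs
          rw [hcoefq]
          simp only [if_neg hs]
          norm_num)]
        refine Finset.sum_congr rfl fun j _ => ?_
        rw [hcoefq]
        by_cases hb : b i j <;> simp [hb, hprdef]
      have E2 : ∀ i, (∑ j, (if η ⟨i, j⟩ then (-1 : ℝ) else 1) * Real.sqrt (p i j))
          = ∑ s : Σ i : Fin q, Fin (k i), (coefq i s : ℝ) * (e s * Real.sqrt (pr s)) := by
        intro i
        rw [hcollect i _ (by
          intro s hs
          rw [hcoefq]
          simp only [if_neg hs]
          norm_num)]
        refine Finset.sum_congr rfl fun j _ => ?_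
        rw [hcoefq, hedef]
        by_cases hb : b i j <;> by_cases hh : η ⟨i, j⟩ <;>
          simp [hb, hh, hprdef] <;> ring
      exact conj_eval pr hprp hprinj e he
        (fun i => ∑ j, (if b i j then (-1 : ℝ) else 1) * Real.sqrt (p i j))
        (fun i => ∑ j, (if η ⟨i, j⟩ then (-1 : ℝ) else 1) * Real.sqrt (p i j))
        coefq E1 E2 Q hval
    -- move to a real polynomial and apply the grid lemma
    set Q' : MvPolynomial (Fin q) ℝ := MvPolynomial.map (Int.castRingHom ℝ) Q with hQ'def
    have hsum_inj : ∀ i : Fin q, Function.Injective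
        (fun v : Fin (k i) → Bool =>
          ∑ j, (if v j then (-1 : ℝ) else 1) * Real.sqrt (p i j)) := by
      intro i v1 v2 hsum
      have hblock : LinearIndependent ℚ (fun j : Fin (k i) => Real.sqrt (pr ⟨i, j⟩)) := by
        refine hsingle.comp (fun j => ⟨i, j⟩) ?_
        intro a c h
        simpa using h
      rw [Fintype.linearIndependent_iff] at hblock
      funext j
      have hg : ∑ jj : Fin (k i),
          ((if v1 jj then (-1 : ℚ) else 1) - (if v2 jj then (-1 : ℚ) else 1)) •
            Real.sqrt (pr ⟨i, jj⟩) = 0 := by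
        have hexp : ∀ jj : Fin (k i),
            ((if v1 jj then (-1 : ℚ) else 1) - (if v2 jj then (-1 : ℚ) else 1)) •
              Real.sqrt (pr ⟨i, jj⟩)
            = (if v1 jj then (-1 : ℝ) else 1) * Real.sqrt (p i jj)
              - (if v2 jj then (-1 : ℝ) else 1) * Real.sqrt (p i jj) := by
          intro jj
          rw [Rat.smul_def, hprdef]
          push_cast
          by_cases h1 : v1 jj <;> by_cases h2 : v2 jj <;> simp [h1, h2] <;> ring
        have hsum' : (∑ j, (if v1 j then (-1 : ℝ) else 1) * Real.sqrt (p i j))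
            = ∑ j, (if v2 j then (-1 : ℝ) else 1) * Real.sqrt (p i j) := hsum
        rw [Finset.sum_congr rfl (fun jj _ => hexp jj), Finset.sum_sub_distrib, hsum', sub_self]
      have hthis := hblock _ hg j
      by_cases h1 : v1 j <;> by_cases h2 : v2 j
      · rw [h1, h2]
      · exfalso; rw [if_pos h1, if_neg h2] at hthis; norm_num at hthis
      · exfalso; rw [if_neg h1, if_pos h2] at hthis; norm_num at hthis
      · rw [Bool.not_eq_true] at h1 h2; rw [h1, h2]
    set A : (i : Fin q) → Finset ℝ := fun i =>
      Finset.image (fun v : Fin (k i) → Bool =>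
        ∑ j, (if v j then (-1 : ℝ) else 1) * Real.sqrt (p i j)) Finset.univ with hA
    have hcard : ∀ i, (A i).card = 2 ^ k i := by
      intro i
      rw [hA]
      simp only
      rw [Finset.card_image_of_injective _ (hsum_inj i), Finset.card_univ]
      simp [Fintype.card_fun]
    have hdeg' : ∀ i, Q'.degreeOf i < (A i).card := by
      intro i
      have h1 : Q'.degreeOf i ≤ Q.degreeOf i := by
        refine MvPolynomial.degreeOf_le_iff.mpr fun m hm => ?_
        have hmm : MvPolynomial.coeff m Q ≠ 0 := by
          intro hcc
          rw [MvPolynomial.mem_support_iff, hQ'def, MvPolynomial.coeff_map, hcc] at hm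
          simp at hm
        exact MvPolynomial.degreeOf_le_iff.mp le_rfl m (MvPolynomial.mem_support_iff.mpr hmm)
      rw [hcard i]
      exact lt_of_le_of_lt h1 (hdeg i)
    have hgridz : ∀ y : Fin q → ℝ, (∀ i, y i ∈ A i) → MvPolynomial.eval y Q' = 0 := by
      intro y hy
      have hy' : ∀ i, ∃ v : Fin (k i) → Bool,
          (∑ j, (if v j then (-1 : ℝ) else 1) * Real.sqrt (p i j)) = y i := by
        intro i
        have hyi := hy i
        rw [hA] at hyi
        simp only [Finset.mem_image] at hyi
        obtain ⟨v, _, hv⟩ := hyi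
        exact ⟨v, hv⟩
      choose v hv using hy'
      have hz := hzero (fun s => v s.1 s.2)
      have hyeq : (fun i => ∑ j, (if (fun s : Σ i : Fin q, Fin (k i) => v s.1 s.2) ⟨i, j⟩
          then (-1 : ℝ) else 1) * Real.sqrt (p i j)) = y := by
        funext i
        exact hv i
      rw [hyeq] at hz
      have heval : MvPolynomial.eval y Q' = MvPolynomial.aeval y Q := by
        rw [hQ'def, MvPolynomial.aeval_def, MvPolynomial.eval₂_eq_eval_map, algebraMap_int_eq]
      rw [heval]
      exact hz
    have hQ'0 : Q' = 0 := grid_zero q Q' A hdeg' hgridz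
    refine MvPolynomial.map_injective (Int.castRingHom ℝ) Int.cast_injective ?_
    rw [map_zero, ← hQ'def]
    exact hQ'0
  · intro hne h0
    exact hne (by rw [h0, map_zero])
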